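/- Let S = {p_1,...,p_m} be a finite set of m pmfs on {0,1}. Then there exists a pmf q with support size at most m+1 such that CGeom_{1/2,m+1} ⪯ q and every p_i is an aggregation of q (q ⊑ p_i for all i ∈ [m]). -/

import Mathlib

open scoped ENNReal Classical
open Filter

namespace MEC

/-- A probability mass function on `α`: (nonnegative) masses summing to `1`. -/
def IsPMF {α : Type*} (p : α → ℝ≥0∞) : Prop := ∑' x, p x = 1

/-- `p` is an aggregation of `q`, written `q ⊑ p`: there is a map `g` sending the support of
`q` into the support of `p` such that `p` is the pushforward of `q` under `g`. -/
def Agg {α β : Type*} (q : α → ℝ≥0∞) (p : β → ℝ≥0∞) : Prop :=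
  ∃ g : α → β, (∀ x, q x ≠ 0 → p (g x) ≠ 0) ∧
    ∀ y, p y = ∑' x, if g x = y then q x else 0

/-- Sum of the `k` largest masses of `p`, i.e. `max_{A, |A| ≤ k} p(A)`. -/
noncomputable def topk {α : Type*} (p : α → ℝ≥0∞) (k : ℕ) : ℝ≥0∞ :=
  ⨆ (A : Finset α) (_ : A.card ≤ k), ∑ x ∈ A, p x

/-- `q` is majorized by `p`, written `q ⪯ p`: for every `k`, the sum of the `k` largest
masses of `q` is at most the sum of the `k` largest masses of `p`. -/
def Majorized {α β : Type*} (q : α → ℝ≥0∞) (p : β → ℝ≥0∞) : Prop :=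
  ∀ k : ℕ, topk q k ≤ topk p k

/-- Product pmf `(q × r)(x,z) = q(x) · r(z)`. -/
noncomputable def prodFun {α β : Type*} (q : α → ℝ≥0∞) (r : β → ℝ≥0∞) : α × β → ℝ≥0∞ :=
  fun z => q z.1 * r z.2

/-- `Geom_{1/2}` on `ℕ+ = {1,2,3,...}`, with mass `2^{-x}` at `x`. -/
noncomputable def geomHalf : ℕ+ → ℝ≥0∞ := fun x => 2⁻¹ ^ (x : ℕ)

/-- Capped geometric distribution `CGeom_{1/2,k}` on `{1,...,k} ⊆ ℕ+`. -/
noncomputable def cgeomHalf (k : ℕ) : ℕ+ → ℝ≥0∞ := fun x =>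
  if (x : ℕ) < k then 2⁻¹ ^ (x : ℕ) else if (x : ℕ) = k then 2⁻¹ ^ (k - 1) else 0

/-- `inf_{p ∈ S} max_{A ⊆ supp(p), |A| ≤ k} p(A)`. -/
noncomputable def infTopk {α : Type*} (S : Set (α → ℝ≥0∞)) (k : ℕ) : ℝ≥0∞ :=
  ⨅ p ∈ S, topk p k

/-- The greatest lower bound `⋀S` of `S` with respect to majorization, as a pmf on
`ℕ+ = {1,2,...}`, with `(⋀S)(k) = inf_{p∈S} max_{|A|≤k} p(A) − inf_{p∈S} max_{|A|≤k−1} p(A)`. -/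
noncomputable def glb {α : Type*} (S : Set (α → ℝ≥0∞)) : ℕ+ → ℝ≥0∞ :=
  fun k => infTopk S (k : ℕ) - infTopk S ((k : ℕ) - 1)

/-- Condition for the existence of `⋀S`:
`lim_{k→∞} inf_{p∈S} max_{A⊆supp(p), |A|≤k} p(A) = 1`. -/
def GlbExists {α : Type*} (S : Set (α → ℝ≥0∞)) : Prop :=
  Tendsto (fun k => infTopk S k) atTop (nhds 1)

/-- Base-2 logarithm on `ℝ≥0∞` (intended for arguments in `[1,∞]`). -/
noncomputable def log2 (x : ℝ≥0∞) : ℝ≥0∞ :=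
  if x = ∞ then ∞ else ENNReal.ofReal (Real.logb 2 x.toReal)

/-- Shannon entropy (base 2): `H(p) = Σ_x p(x) log₂ (1/p(x))`. -/
noncomputable def shannon {α : Type*} (p : α → ℝ≥0∞) : ℝ≥0∞ :=
  ∑' x, p x * log2 (p x)⁻¹

/-- Rényi entropy of order `a ∈ [0,∞]` (base 2):
`H_a(p) = (1/(1−a)) log₂ Σ_{x ∈ supp(p)} p(x)^a` for `a ∉ {1,∞}` (for `a > 1` this is
written in the equivalent form `(1/(a−1)) log₂ (Σ_{x ∈ supp(p)} p(x)^a)⁻¹` so that it is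
nonnegative), Shannon entropy for `a = 1`, and `−log₂ max_x p(x)` for `a = ∞`. -/
noncomputable def renyi {α : Type*} (p : α → ℝ≥0∞) (a : ℝ≥0∞) : ℝ≥0∞ :=
  if a = 1 then shannon p
  else if a = ∞ then log2 (⨆ x, p x)⁻¹
  else if a < 1 then log2 (∑' x, if p x = 0 then 0 else p x ^ a.toReal) * (1 - a)⁻¹
  else log2 (∑' x, if p x = 0 then 0 else p x ^ a.toReal)⁻¹ * (a - 1)⁻¹

/-- `q ∈ Γ̃(S)`: `q` (a pmf over `ℕ`, without loss of generality) is an underlying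
distribution of a coupling of `S`, i.e. `q ⊑ p` for every `p ∈ S`. -/
def UnderlyingCoupling {α : Type*} (S : Set (α → ℝ≥0∞)) (q : ℕ → ℝ≥0∞) : Prop :=
  IsPMF q ∧ ∀ p ∈ S, Agg q p

/-- `H*_a(S) = inf_{q ∈ Γ̃(S)} H_a(q)`, the minimum Rényi entropy of couplings of `S`. -/
noncomputable def minRenyi {α : Type*} (S : Set (α → ℝ≥0∞)) (a : ℝ≥0∞) : ℝ≥0∞ :=
  ⨅ (q : ℕ → ℝ≥0∞) (_ : UnderlyingCoupling S q), renyi q a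

private lemma half_add_half : (2⁻¹ : ℝ≥0∞) + 2⁻¹ = 1 := ENNReal.inv_two_add_inv_two

private lemma core : ∀ (n : ℕ) (L : List ℝ≥0∞) (b : ℝ≥0∞), L.length = n → b ≠ ∞ →
    (∀ x ∈ L, x ≤ b) →
    ∃ q : ℕ → ℝ≥0∞,
      (∀ i, n < i → q i = 0) ∧
      (∑ i ∈ Finset.range (n + 1), q i = b) ∧
      (∀ k, b ≤ ∑ i ∈ Finset.range k, q i + b * 2⁻¹ ^ k) ∧
      (∀ x ∈ L, ∃ f : ℕ → Bool,
        ∑ i ∈ Finset.range (n + 1), (if f i = true then q i else 0) = x) := by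
  intro n
  induction n with
  | zero =>
    intro L b hlen hb hle
    refine ⟨fun i => if i = 0 then b else 0, ?_, ?_, ?_, ?_⟩
    · intro i hi; exact if_neg (by omega)
    · simp
    · intro k
      cases k with
      | zero => simp
      | succ j =>
        have h0 : (0 : ℕ) ∈ Finset.range (j + 1) := by simp
        calc b = (if (0:ℕ) = 0 then b else 0) := by simp
        _ ≤ ∑ i ∈ Finset.range (j + 1), (if i = 0 then b else 0) :=
            Finset.single_le_sum (f := fun i => if i = 0 then b else 0)
              (fun i _ => zero_le) h0
        _ ≤ _ := le_self_add
    · intro x hx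
      rw [List.length_eq_zero_iff] at hlen
      subst hlen; simp at hx
  | succ n ih =>
    intro L b hlen hb hle
    have hLne : L ≠ [] := by intro h; subst h; simp at hlen
    obtain ⟨xs, hxs⟩ : ∃ xs, xs ∈ L.argmax (fun z => min z (b - z)) := by
      cases h : L.argmax (fun z => min z (b - z)) with
      | none => exact absurd (List.argmax_eq_none.mp h) hLne
      | some a => exact ⟨a, rfl⟩
    have hmem : xs ∈ L := List.argmax_mem hxs
    set y : ℝ≥0∞ := min xs (b - xs) with hy
    set c : ℝ≥0∞ := b - y with hc
    have hxb : xs ≤ b := hle xs hmem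
    have hyle : y ≤ b := le_trans (min_le_left _ _) hxb
    have hyne : y ≠ ∞ := fun h => hb (top_le_iff.mp (h ▸ hyle))
    have hcy : c + y = b := tsub_add_cancel_of_le hyle
    have hy2 : y + y ≤ b := by
      calc y + y ≤ (b - xs) + xs := add_le_add (min_le_right _ _) (min_le_left _ _)
      _ = b := tsub_add_cancel_of_le hxb
    have hyhalf : y ≤ b * 2⁻¹ := by
      rw [← div_eq_mul_inv, ENNReal.le_div_iff_mul_le (Or.inl two_ne_zero)
        (Or.inl (by norm_num)), mul_two]
      exact hy2
    set L' : List ℝ≥0∞ := (L.erase xs).map (fun z => min z (b - z)) with hL'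
    have hlen' : L'.length = n := by
      rw [hL', List.length_map, List.length_erase_of_mem hmem, hlen]
      omega
    have hle' : ∀ z ∈ L', z ≤ y := by
      intro z hz
      rw [hL', List.mem_map] at hz
      obtain ⟨w, hw, rfl⟩ := hz
      exact List.le_of_mem_argmax (List.mem_of_mem_erase hw) hxs
    obtain ⟨q', hq1, hq2, hq3, hq4⟩ := ih L' y hlen' hyne hle'
    set q : ℕ → ℝ≥0∞ := fun i => if i = 0 then c else q' (i - 1) with hq
    have hq0 : q 0 = c := by simp [hq]
    have hqs : ∀ i : ℕ, q (i + 1) = q' i := by intro i; simp [hq]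
    have hsum : ∀ (g : ℕ → ℝ≥0∞) (k : ℕ),
        ∑ i ∈ Finset.range (k + 1), g i = (∑ i ∈ Finset.range k, g (i + 1)) + g 0 :=
      fun g k => Finset.sum_range_succ' g k
    refine ⟨q, ?_, ?_, ?_, ?_⟩
    · intro i hi
      match i, hi with
      | (j+1), hi => rw [hqs]; exact hq1 j (by omega)
    · rw [hsum q (n + 1)]
      have : ∀ i ∈ Finset.range (n + 1), q (i + 1) = q' i := fun i _ => hqs i
      rw [Finset.sum_congr rfl this, hq2, hq0, add_comm]
      exact hcy
    · intro k
      cases k with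
      | zero => simpa using le_self_add
      | succ j =>
        have h3 := hq3 j
        have hterm : y * 2⁻¹ ^ j ≤ b * 2⁻¹ ^ (j + 1) := by
          calc y * 2⁻¹ ^ j ≤ (b * 2⁻¹) * 2⁻¹ ^ j := mul_le_mul_left hyhalf _
          _ = b * 2⁻¹ ^ (j + 1) := by rw [pow_succ]; ring
        rw [hsum q j, Finset.sum_congr rfl (fun i _ => hqs i), hq0]
        calc b = c + y := hcy.symm
        _ ≤ c + (∑ i ∈ Finset.range j, q' i + y * 2⁻¹ ^ j) := add_le_add_right h3 _
        _ ≤ c + (∑ i ∈ Finset.range j, q' i + b * 2⁻¹ ^ (j + 1)) :=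
            add_le_add_right (add_le_add_right hterm _) _
        _ = ∑ i ∈ Finset.range j, q' i + c + b * 2⁻¹ ^ (j + 1) := by ring
    · intro x hx
      by_cases hxxs : x = xs
      · subst hxxs
        by_cases hm : x ≤ b - x
        · -- y = x; take all atoms except atom 0
          have hyx : y = x := min_eq_left hm
          refine ⟨fun i => decide (i ≠ 0), ?_⟩
          rw [hsum _ (n + 1)]
          have : ∀ i ∈ Finset.range (n + 1),
              (if (decide ((i+1) ≠ 0)) = true then q (i + 1) else 0) = q' i := by
            intro i _; simp [hqs]
          rw [Finset.sum_congr rfl this, hq2]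
          simp [hyx]
        · -- y = b - x; take atom 0, which equals x
          have hyx : y = b - x := min_eq_right (le_of_not_ge hm)
          have hcx : c = x := by rw [hc, hyx, ENNReal.sub_sub_cancel hb hxb]
          refine ⟨fun i => decide (i = 0), ?_⟩
          rw [hsum _ (n + 1)]
          have : ∀ i ∈ Finset.range (n + 1),
              (if (decide ((i+1) = 0)) = true then q (i + 1) else 0) = 0 := by
            intro i _; simp
          rw [Finset.sum_congr rfl this, Finset.sum_const_zero, zero_add]
          simpa [hq0] using hcx
      · have hxe : x ∈ L.erase xs := (List.mem_erase_of_ne hxxs).mpr hx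
        have hxL' : min x (b - x) ∈ L' := by
          rw [hL', List.mem_map]; exact ⟨x, hxe, rfl⟩
        obtain ⟨f', hf'⟩ := hq4 _ hxL'
        have hxble : x ≤ b := hle x hx
        by_cases hm : x ≤ b - x
        · have hmx : min x (b - x) = x := min_eq_left hm
          refine ⟨fun i => if i = 0 then false else f' (i - 1), ?_⟩
          rw [hsum _ (n + 1)]
          have h1 : ∀ i ∈ Finset.range (n + 1),
              (if (if (i+1) = 0 then false else f' (i+1-1)) = true then q (i + 1) else 0)
              = (if f' i = true then q' i else 0) := by
            intro i _; simp [hqs]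
          rw [Finset.sum_congr rfl h1, hf', hmx]
          simp
        · have hmx : min x (b - x) = b - x := min_eq_right (le_of_not_ge hm)
          have hbxy : b - x ≤ y := by
            have := List.le_of_mem_argmax hx hxs
            rwa [hmx] at this
          -- complement within the bucket, plus atom 0
          refine ⟨fun i => if i = 0 then true else !(f' (i - 1)), ?_⟩
          rw [hsum _ (n + 1)]
          have h1 : ∀ i ∈ Finset.range (n + 1),
              (if (if (i+1) = 0 then true else !(f' (i+1-1))) = true then q (i + 1) else 0)
              = (if f' i = true then 0 else q' i) := by
            intro i _
            cases hfi : f' i <;> simp [hqs, hfi]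
          rw [Finset.sum_congr rfl h1]
          have hsplit : (∑ i ∈ Finset.range (n + 1), (if f' i = true then q' i else 0))
              + (∑ i ∈ Finset.range (n + 1), (if f' i = true then 0 else q' i)) = y := by
            rw [← Finset.sum_add_distrib, ← hq2]
            refine Finset.sum_congr rfl (fun i _ => ?_)
            cases f' i <;> simp
          rw [hf', hmx] at hsplit
          have hcompl : (∑ i ∈ Finset.range (n + 1), (if f' i = true then 0 else q' i))
              = y - (b - x) := by
            have hne : b - x ≠ ∞ := fun h => hyne (top_le_iff.mp (h ▸ hbxy))
            rw [← hsplit, ENNReal.add_sub_cancel_left hne]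
          rw [hcompl]
          have hg0 : (if (if (0:ℕ) = 0 then true else !(f' (0 - 1))) = true
              then q 0 else 0) = c := by simp [hq0]
          rw [hg0]
          have hbxne : b - x ≠ ∞ := fun h => hyne (top_le_iff.mp (h ▸ hbxy))
          rw [← ENNReal.add_left_inj hbxne]
          have h2 : y - (b - x) + c + (b - x) = c + y := by
            rw [add_comm (y - (b - x)) c, add_assoc, tsub_add_cancel_of_le hbxy]
          rw [h2, hcy, add_comm x (b - x), tsub_add_cancel_of_le hxble]

private lemma half_add_half' : (2⁻¹ : ℝ≥0∞) + 2⁻¹ = 1 := ENNReal.inv_two_add_inv_two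

private lemma geom_sum' : ∀ k : ℕ,
    (∑ j ∈ Finset.range k, (2⁻¹ : ℝ≥0∞) ^ (j + 1)) + 2⁻¹ ^ k = 1 := by
  intro k
  induction k with
  | zero => simp
  | succ k ih =>
    have hh : (2⁻¹ : ℝ≥0∞) ^ (k + 1) + 2⁻¹ ^ (k + 1) = 2⁻¹ ^ k := by
      rw [pow_succ, ← mul_add, half_add_half', mul_one]
    rw [Finset.sum_range_succ, add_assoc, hh, ih]

private lemma le_topk {α : Type*} (p : α → ℝ≥0∞) (k : ℕ) (A : Finset α) (h : A.card ≤ k) :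
    ∑ x ∈ A, p x ≤ topk p k := le_iSup₂_of_le A h le_rfl

private lemma topk_le {α : Type*} {p : α → ℝ≥0∞} {k : ℕ} {c : ℝ≥0∞}
    (h : ∀ A : Finset α, A.card ≤ k → ∑ x ∈ A, p x ≤ c) : topk p k ≤ c := iSup₂_le h

private lemma antitone_sum_le (h : ℕ+ → ℝ≥0∞) (hh : ∀ x y : ℕ+, x ≤ y → h y ≤ h x) :
    ∀ (k : ℕ) (A : Finset ℕ+), A.card ≤ k →
      ∑ x ∈ A, h x ≤ ∑ j ∈ Finset.range k, h ⟨j + 1, j.succ_pos⟩ := by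
  intro k
  induction k with
  | zero =>
    intro A hA
    have : A = ∅ := Finset.card_eq_zero.mp (Nat.le_zero.mp hA)
    subst this; simp
  | succ k ih =>
    intro A hA
    rcases Nat.lt_or_ge A.card (k + 1) with hlt | hge
    · calc ∑ x ∈ A, h x ≤ ∑ j ∈ Finset.range k, h ⟨j + 1, j.succ_pos⟩ := ih A (by omega)
      _ ≤ _ := Finset.sum_le_sum_of_subset (Finset.range_subset_range.mpr (by omega))
    · have hcard : A.card = k + 1 := le_antisymm hA hge
      have hne : A.Nonempty := Finset.card_pos.mp (by omega)
      set M := A.max' hne with hM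
      have hMmem : M ∈ A := A.max'_mem hne
      have hcardle : A.card ≤ (M : ℕ) := by
        have hsub : A ⊆ Finset.Icc 1 M := by
          intro x hx
          rw [Finset.mem_Icc]
          exact ⟨x.one_le, A.le_max' x hx⟩
        calc A.card ≤ (Finset.Icc 1 M).card := Finset.card_le_card hsub
        _ = (M : ℕ) := by rw [PNat.card_Icc]; simp
      have hMk : (⟨k + 1, k.succ_pos⟩ : ℕ+) ≤ M := by
        have hk1 : k + 1 ≤ (M : ℕ) := hcard ▸ hcardle
        exact_mod_cast hk1
      have herase : (A.erase M).card ≤ k := by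
        rw [Finset.card_erase_of_mem hMmem]; omega
      calc ∑ x ∈ A, h x = ∑ x ∈ A.erase M, h x + h M := (Finset.sum_erase_add A h hMmem).symm
      _ ≤ (∑ j ∈ Finset.range k, h ⟨j + 1, j.succ_pos⟩) + h ⟨k + 1, k.succ_pos⟩ :=
          add_le_add (ih _ herase) (hh _ _ hMk)
      _ = _ := (Finset.sum_range_succ _ k).symm

private lemma cgeom_le_min (m : ℕ) (x : ℕ+) :
    cgeomHalf (m + 1) x ≤ (2⁻¹ : ℝ≥0∞) ^ (min (x : ℕ) m) := by
  unfold cgeomHalf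
  split_ifs with h1 h2
  · have : min (x : ℕ) m = (x : ℕ) := min_eq_left (by omega)
    rw [this]
  · have : min (x : ℕ) m = m := min_eq_right (by omega)
    rw [this]; simp
  · exact zero_le

private lemma min_antitone (m : ℕ) : ∀ x y : ℕ+, x ≤ y →
    (2⁻¹ : ℝ≥0∞) ^ (min (y : ℕ) m) ≤ 2⁻¹ ^ (min (x : ℕ) m) := by
  intro x y hxy
  refine pow_le_pow_of_le_one zero_le (ENNReal.inv_le_one.mpr one_le_two) ?_
  have : (x : ℕ) ≤ (y : ℕ) := by exact_mod_cast hxy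
  omega

private lemma topk_cgeom_le (m k : ℕ) (hk : k ≤ m) :
    topk (cgeomHalf (m + 1)) k ≤ ∑ j ∈ Finset.range k, (2⁻¹ : ℝ≥0∞) ^ (j + 1) := by
  apply topk_le
  intro A hA
  calc ∑ x ∈ A, cgeomHalf (m + 1) x ≤ ∑ x ∈ A, (2⁻¹ : ℝ≥0∞) ^ (min (x : ℕ) m) :=
      Finset.sum_le_sum (fun x _ => cgeom_le_min m x)
  _ ≤ ∑ j ∈ Finset.range k, (2⁻¹ : ℝ≥0∞) ^ (min ((⟨j + 1, j.succ_pos⟩ : ℕ+) : ℕ) m) :=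
      antitone_sum_le _ (min_antitone m) k A hA
  _ = ∑ j ∈ Finset.range k, (2⁻¹ : ℝ≥0∞) ^ (j + 1) := by
      refine Finset.sum_congr rfl (fun j hj => ?_)
      have hj' : j < k := Finset.mem_range.mp hj
      have : min (((⟨j + 1, j.succ_pos⟩ : ℕ+)) : ℕ) m = j + 1 := by
        show min (j + 1) m = j + 1
        exact min_eq_left (by omega)
      rw [this]

private lemma tsum_cgeom (m : ℕ) : ∑' x : ℕ+, cgeomHalf (m + 1) x = 1 := by
  rw [← Equiv.pnatEquivNat.symm.tsum_eq (cgeomHalf (m + 1))]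
  have hco : ∀ n : ℕ, ((Equiv.pnatEquivNat.symm n : ℕ+) : ℕ) = n + 1 := by
    intro n
    simp [Equiv.pnatEquivNat]
  have hzero : ∀ n ∉ Finset.range (m + 1), cgeomHalf (m + 1) (Equiv.pnatEquivNat.symm n) = 0 := by
    intro n hn
    rw [Finset.mem_range] at hn
    unfold cgeomHalf
    rw [hco n, if_neg (by omega), if_neg (by omega)]
  rw [tsum_eq_sum hzero, Finset.sum_range_succ]
  have h1 : ∀ n ∈ Finset.range m,
      cgeomHalf (m + 1) (Equiv.pnatEquivNat.symm n) = (2⁻¹ : ℝ≥0∞) ^ (n + 1) := by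
    intro n hn
    rw [Finset.mem_range] at hn
    unfold cgeomHalf
    rw [hco n, if_pos (by omega)]
  have h2 : cgeomHalf (m + 1) (Equiv.pnatEquivNat.symm m) = (2⁻¹ : ℝ≥0∞) ^ m := by
    unfold cgeomHalf
    rw [hco m, if_neg (by omega), if_pos rfl]
    simp
  rw [Finset.sum_congr rfl h1, h2, geom_sum']

/-- Lemma 2, Bernoulli splitting: for a set `S` of `m` pmfs on `{0,1}`,
there is a pmf `q` with support size at most `m + 1` such that `CGeom_{1/2,m+1} ⪯ q`
and `q ⊑ p` for every `p ∈ S`. -/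
theorem bernoulli_splitting (m : ℕ) (S : Set (Bool → ℝ≥0∞))
    (hcard : S.encard = m) (hS : ∀ p ∈ S, IsPMF p) :
    ∃ q : ℕ → ℝ≥0∞, IsPMF q ∧ {x | q x ≠ 0}.encard ≤ (m : ℕ∞) + 1 ∧
      Majorized (cgeomHalf (m + 1)) q ∧ ∀ p ∈ S, Agg q p := by
  have hfin : S.Finite := Set.finite_of_encard_eq_coe hcard
  set F := hfin.toFinset with hF
  have hFcard : F.card = m := by
    have h := hfin.encard_eq_coe_toFinset_card
    rw [hcard] at h
    exact_mod_cast h.symm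
  set L : List ℝ≥0∞ := F.toList.map (fun p => p true) with hL
  have hlenL : L.length = m := by
    rw [hL, List.length_map, Finset.length_toList, hFcard]
  have hpmf2 : ∀ p ∈ S, p false + p true = 1 := by
    intro p hp
    have h := hS p hp
    rwa [IsPMF, tsum_bool] at h
  have hple : ∀ x ∈ L, x ≤ (1 : ℝ≥0∞) := by
    intro x hx
    rw [hL, List.mem_map] at hx
    obtain ⟨p, hp, rfl⟩ := hx
    have hp' : p ∈ S := hfin.mem_toFinset.mp (Finset.mem_toList.mp hp)
    calc p true ≤ p false + p true := le_add_self
    _ = 1 := hpmf2 p hp'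
  obtain ⟨q, h1, h2, h3, h4⟩ := core m L 1 hlenL ENNReal.one_ne_top hple
  have hzero : ∀ i ∉ Finset.range (m + 1), q i = 0 := by
    intro i hi
    exact h1 i (by simpa [Finset.mem_range] using hi)
  have hqpmf : IsPMF q := by rw [IsPMF, tsum_eq_sum hzero, h2]
  refine ⟨q, hqpmf, ?_, ?_, ?_⟩
  · -- support size
    have hsub : {x | q x ≠ 0} ⊆ ↑(Finset.range (m + 1)) := by
      intro x hx
      rw [Finset.coe_range, Set.mem_Iio]
      by_contra hc
      exact hx (h1 x (by omega))
    calc {x | q x ≠ 0}.encard ≤ (↑(Finset.range (m + 1)) : Set ℕ).encard :=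
        Set.encard_mono hsub
    _ = ((m + 1 : ℕ) : ℕ∞) := by
        rw [Set.encard_coe_eq_coe_finsetCard, Finset.card_range]
    _ = (m : ℕ∞) + 1 := by push_cast; rfl
  · -- majorization
    intro k
    rcases le_or_gt k m with hk | hk
    · have ha := topk_cgeom_le m k hk
      have hb : (∑ j ∈ Finset.range k, (2⁻¹ : ℝ≥0∞) ^ (j + 1)) ≤ ∑ i ∈ Finset.range k, q i := by
        have h3k := h3 k
        rw [one_mul] at h3k
        have hg := geom_sum' k
        have hle : (∑ j ∈ Finset.range k, (2⁻¹ : ℝ≥0∞) ^ (j + 1)) + 2⁻¹ ^ k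
            ≤ (∑ i ∈ Finset.range k, q i) + 2⁻¹ ^ k := hg.trans_le h3k
        have hnt : ((2⁻¹ : ℝ≥0∞) ^ k) ≠ ∞ :=
          ENNReal.pow_ne_top (ENNReal.inv_ne_top.mpr two_ne_zero)
        exact (ENNReal.add_le_add_iff_right hnt).mp hle
      calc topk (cgeomHalf (m + 1)) k ≤ ∑ j ∈ Finset.range k, (2⁻¹ : ℝ≥0∞) ^ (j + 1) := ha
      _ ≤ ∑ i ∈ Finset.range k, q i := hb
      _ ≤ topk q k := le_topk q k (Finset.range k) (by rw [Finset.card_range])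
    · have ha : topk (cgeomHalf (m + 1)) k ≤ 1 :=
        topk_le (fun A _ => (ENNReal.sum_le_tsum A).trans (tsum_cgeom m).le)
      calc topk (cgeomHalf (m + 1)) k ≤ 1 := ha
      _ = ∑ i ∈ Finset.range (m + 1), q i := h2.symm
      _ ≤ topk q k := le_topk q k _ (by rw [Finset.card_range]; omega)
  · -- aggregation
    intro p hp
    have hxL : p true ∈ L := by
      rw [hL, List.mem_map]
      exact ⟨p, Finset.mem_toList.mpr (hfin.mem_toFinset.mpr hp), rfl⟩
    obtain ⟨f, hf⟩ := h4 (p true) hxL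
    have hTt : (∑' x, if f x = true then q x else 0) = p true := by
      rw [tsum_eq_sum (s := Finset.range (m + 1))
        (fun i hi => by rw [hzero i hi]; simp), hf]
    have hTadd : (∑' x, if f x = true then q x else 0)
        + (∑' x, if f x = false then q x else 0) = 1 := by
      rw [← ENNReal.tsum_add]
      have : ∀ x, ((if f x = true then q x else 0) + (if f x = false then q x else 0)) = q x := by
        intro x; cases f x <;> simp
      rw [tsum_congr this]
      exact hqpmf
    have hptne : p true ≠ ∞ := by
      intro h
      have := hpmf2 p hp
      rw [h, add_top] at this
      exact ENNReal.one_ne_top this.symm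
    have hTf : (∑' x, if f x = false then q x else 0) = p false := by
      rw [hTt] at hTadd
      have h2' : p true + (∑' x, if f x = false then q x else 0) = p true + p false := by
        rw [hTadd, add_comm (p true) (p false)]
        exact (hpmf2 p hp).symm ▸ rfl
      exact (ENNReal.add_right_inj hptne).mp h2'
    refine ⟨f, ?_, ?_⟩
    · intro x hx
      cases hfx : f x with
      | true =>
        have : q x ≤ p true := by
          rw [← hTt]
          have := ENNReal.le_tsum (f := fun x => if f x = true then q x else 0) x
          rwa [hfx, if_pos rfl] at this
        exact fun h0 => hx (le_antisymm (h0 ▸ this) zero_le)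
      | false =>
        have : q x ≤ p false := by
          rw [← hTf]
          have := ENNReal.le_tsum (f := fun x => if f x = false then q x else 0) x
          rwa [hfx, if_pos rfl] at this
        exact fun h0 => hx (le_antisymm (h0 ▸ this) zero_le)
    · intro y
      cases y with
      | true =>
        rw [← hTt]
        exact tsum_congr fun x => by cases hfi : f x <;> simp [hfi]
      | false =>
        rw [← hTf]
        exact tsum_congr fun x => by cases hfi : f x <;> simp [hfi]

end MEC
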